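/- Let A be a symmetric trace-free n×n real matrix (n ≥ 2). Then for every unit vector v, |Av|² ≤ (n−1)/n · |A|² (where |A|² is the squared Frobenius norm). Consequently, if Ric = −A² for the second fundamental form A of a minimal hypersurface, then Ric ≥ −(n−1)/n · |A|² g. -/

import Mathlib

open scoped BigOperators
open Matrix

/-- Algebraic Kato-type inequality for traceless symmetric matrices:
for every unit vector `v`, `|Av|² ≤ (n−1)/n |A|²`; consequently
`Ric = −A²` satisfies `Ric ≥ −(n−1)/n |A|² g`. -/
theorem stmt18 {n : ℕ} (hn : 2 ≤ n) (A : Matrix (Fin n) (Fin n) ℝ)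
    (hsymm : A.IsSymm) (htr : A.trace = 0) :
    (∀ v : Fin n → ℝ, ∑ i, v i ^ 2 = 1 →
      ∑ i, (A.mulVec v) i ^ 2 ≤ ((n : ℝ) - 1) / n * ∑ i, ∑ j, A i j ^ 2) ∧
    (∀ v : Fin n → ℝ,
      -(((n : ℝ) - 1) / n * ∑ i, ∑ j, A i j ^ 2) * (∑ i, v i ^ 2)
        ≤ -∑ i, (A.mulVec v) i ^ 2) := by
  have hA : A.IsHermitian := by
    have h : A.transpose.map star = A.transpose := by ext i j; simp
    rw [Matrix.IsHermitian, Matrix.conjTranspose, h]; exact hsymm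
  set b := hA.eigenvectorBasis with hb
  set e := hA.eigenvalues with he
  have hAij : ∀ i j, A j i = A i j := fun i j => congrFun (congrFun hsymm i) j
  -- spectral theorem consequences for traces
  have hU : (star (hA.eigenvectorUnitary : Matrix (Fin n) (Fin n) ℝ)) *
      (hA.eigenvectorUnitary : Matrix (Fin n) (Fin n) ℝ) = 1 :=
    Unitary.coe_star_mul_self _
  have hst : A = (hA.eigenvectorUnitary : Matrix (Fin n) (Fin n) ℝ) * diagonal (RCLike.ofReal ∘ e) *
      star (hA.eigenvectorUnitary : Matrix (Fin n) (Fin n) ℝ) := by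
    exact hA.spectral_theorem
  set U : Matrix (Fin n) (Fin n) ℝ := (hA.eigenvectorUnitary : Matrix (Fin n) (Fin n) ℝ)
  set D : Matrix (Fin n) (Fin n) ℝ := diagonal (RCLike.ofReal ∘ e)
  have hsum : ∑ i, e i = 0 := by
    have h1 : A.trace = D.trace := by
      rw [hst, trace_mul_comm, ← mul_assoc, hU, one_mul]
    rw [htr] at h1
    simpa [D, trace_diagonal] using h1.symm
  have hfrob : (∑ i, ∑ j, A i j ^ 2) = ∑ i, e i ^ 2 := by
    have h2 : (A * A).trace = (D * D).trace := by
      rw [hst]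
      rw [show U * D * star U * (U * D * star U) = U * (D * (star U * U) * D) * star U by
        simp [mul_assoc]]
      rw [hU, mul_one, trace_mul_comm, ← mul_assoc, ← mul_assoc, hU, one_mul]
    have h3 : (A * A).trace = ∑ i, ∑ j, A i j ^ 2 := by
      simp only [Matrix.trace, Matrix.diag, Matrix.mul_apply, sq]
      refine Finset.sum_congr rfl fun i _ => Finset.sum_congr rfl fun j _ => ?_
      rw [hAij i j]
    have h4 : (D * D).trace = ∑ i, e i ^ 2 := by
      simp [D, diagonal_mul_diagonal, trace_diagonal, sq]
    rw [← h3, h2, h4]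
  have hN : (2 : ℝ) ≤ (n : ℝ) := by exact_mod_cast hn
  have hNpos : (0 : ℝ) < n := by linarith
  -- eigenvalue bound
  have hbound : ∀ k, e k ^ 2 ≤ ((n : ℝ) - 1) / n * ∑ i, e i ^ 2 := by
    intro k
    set s := Finset.univ.erase k with hs
    have h1 : ∑ i ∈ s, e i = - e k := by
      have := Finset.sum_erase_add Finset.univ e (Finset.mem_univ k)
      rw [hsum] at this
      linarith [this]
    have h2 : (∑ i ∈ s, e i) ^ 2 ≤ (s.card : ℝ) * ∑ i ∈ s, e i ^ 2 :=
      sq_sum_le_card_mul_sum_sq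
    have hcard : (s.card : ℝ) = (n : ℝ) - 1 := by
      rw [hs, Finset.card_erase_of_mem (Finset.mem_univ k), Finset.card_univ,
        Fintype.card_fin]
      have : (1 : ℕ) ≤ n := by omega
      push_cast [Nat.cast_sub this]
      ring
    have h3 : ∑ i ∈ s, e i ^ 2 = (∑ i, e i ^ 2) - e k ^ 2 := by
      have h := Finset.sum_erase_add Finset.univ (fun i => e i ^ 2) (Finset.mem_univ k)
      rw [hs]; linarith
    rw [h1, hcard, h3] at h2
    rw [div_mul_eq_mul_div, le_div_iff₀ hNpos]
    nlinarith [h2]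
  -- main estimate via orthonormal eigenbasis
  have main : ∀ v : Fin n → ℝ,
      ∑ i, (A.mulVec v) i ^ 2
        ≤ (((n : ℝ) - 1) / n * ∑ i, ∑ j, A i j ^ 2) * ∑ i, v i ^ 2 := by
    intro v
    set v' : EuclideanSpace ℝ (Fin n) := WithLp.toLp 2 v with hv'
    set c : Fin n → ℝ := fun k => inner (𝕜 := ℝ) (b k) v' with hc
    have parseval : ∀ x : EuclideanSpace ℝ (Fin n),
        (∑ i, x i ^ 2) = ∑ k, (inner (𝕜 := ℝ) (b k) x) ^ 2 := by
      intro x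
      have hx := b.sum_inner_mul_inner x x
      have h2 : inner (𝕜 := ℝ) x x = ∑ i, x i ^ 2 := by
        rw [PiLp.inner_apply]; simp [RCLike.inner_apply, sq]
      rw [h2] at hx
      rw [← hx]
      refine Finset.sum_congr rfl fun k _ => ?_
      rw [real_inner_comm x (b k), sq]
    have key : ∀ k, inner (𝕜 := ℝ) (b k) (WithLp.toLp 2 (A.mulVec v) : EuclideanSpace ℝ (Fin n))
        = e k * c k := by
      intro k
      have h1 : inner (𝕜 := ℝ) (b k) (WithLp.toLp 2 (A.mulVec v) : EuclideanSpace ℝ (Fin n))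
          = (⇑(b k)) ⬝ᵥ (A *ᵥ v) := by
        simp [PiLp.inner_apply, dotProduct, RCLike.inner_apply, mul_comm]
      rw [h1, dotProduct_mulVec, show (⇑(b k)) ᵥ* A = A *ᵥ ⇑(b k) by
        conv_lhs => rw [← hsymm]
        exact vecMul_transpose A _]
      rw [hA.mulVec_eigenvectorBasis k]
      simp only [hc, PiLp.inner_apply, RCLike.inner_apply, smul_dotProduct, dotProduct,
        Pi.smul_apply, smul_eq_mul, starRingEnd_apply, star_trivial]
      rw [Finset.mul_sum]
      exact Finset.sum_congr rfl fun x _ => by rw [mul_assoc]; exact congrArg _ (mul_comm _ _)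
    have hAv : ∑ i, (A.mulVec v) i ^ 2 = ∑ k, (e k * c k) ^ 2 := by
      rw [parseval (WithLp.toLp 2 (A.mulVec v) : EuclideanSpace ℝ (Fin n))]
      exact Finset.sum_congr rfl fun k _ => by rw [key k]
    have hv2 : ∑ i, v i ^ 2 = ∑ k, c k ^ 2 := parseval v'
    rw [hAv, hv2, hfrob, Finset.mul_sum]
    refine Finset.sum_le_sum fun k _ => ?_
    have := hbound k
    have hck : (0 : ℝ) ≤ c k ^ 2 := sq_nonneg _
    calc (e k * c k) ^ 2 = e k ^ 2 * c k ^ 2 := by ring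
      _ ≤ (((n : ℝ) - 1) / n * ∑ i, e i ^ 2) * c k ^ 2 := by
          exact mul_le_mul_of_nonneg_right this hck
  constructor
  · intro v hv
    have := main v
    rw [hv, mul_one] at this
    exact this
  · intro v
    have := main v
    linarith [this]
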